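/- arXiv:2210.11347 — 4 statements merged into one kernel-verified Lean document; each statement's English description precedes it below -/
import Mathlib

section
/- First Hadamard variation formula: let M be an n×n Hermitian matrix with a simple eigenvalue μ and unit eigenvector v, and let B be Hermitian. Suppose λ : (−ε, ε) → ℝ and w : (−ε, ε) → ℂⁿ are differentiable at 0, with (M + tB) w(t) = λ(t) w(t), ‖w(t)‖ = 1 for all t, λ(0) = μ and w(0) = v. Then λ′(0) = v* B v. In particular, if M = QΛQ* with Q unitary, Λ = diag(λ₁,…,λₙ), and μ = λ_j, then λ′(0) = (Q*BQ)_{jj}. -/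
open Matrix

/-- First Hadamard variation formula: if `μ` is a simple eigenvalue of the Hermitian
matrix `M` with unit eigenvector `v`, `B` is Hermitian, and `λ(t)`, `w(t)` are an
eigenvalue/unit-eigenvector family for `M + tB` differentiable at `0` with
`λ(0) = μ`, `w(0) = v`, then `λ′(0) = v* B v`. In particular, if `v = Q e_j` for a
unitary `Q`, then `λ′(0) = (Q* B Q)_{jj}`. -/
theorem first_hadamard_variation (n : ℕ) (M B : Matrix (Fin n) (Fin n) ℂ)
    (hM : M.IsHermitian) (hB : B.IsHermitian)
    (μ : ℝ) (v : Fin n → ℂ)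
    (hv_norm : ∑ i, ‖v i‖ ^ 2 = 1)
    (hv_eig : M.mulVec v = (μ : ℂ) • v)
    (hsimple : ∀ w : Fin n → ℂ, M.mulVec w = (μ : ℂ) • w → ∃ c : ℂ, w = c • v)
    (ε : ℝ) (hε : 0 < ε)
    (lam : ℝ → ℝ) (w : ℝ → Fin n → ℂ)
    (hlam0 : lam 0 = μ) (hw0 : w 0 = v)
    (heig : ∀ t : ℝ, |t| < ε → (M + t • B).mulVec (w t) = (lam t : ℂ) • w t)
    (hnorm : ∀ t : ℝ, |t| < ε → ∑ i, ‖w t i‖ ^ 2 = 1)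
    (hdlam : DifferentiableAt ℝ lam 0) (hdw : DifferentiableAt ℝ w 0) :
    ((deriv lam 0 : ℝ) : ℂ) = star v ⬝ᵥ B.mulVec v ∧
    ∀ Q : Matrix (Fin n) (Fin n) ℂ, Q ∈ Matrix.unitaryGroup (Fin n) ℂ →
      ∀ j : Fin n, (∀ i, v i = Q i j) →
        ((deriv lam 0 : ℝ) : ℂ) = (Qᴴ * B * Q) j j := by
  -- the two auxiliary scalar functions
  set g : ℝ → ℂ := fun t => star v ⬝ᵥ w t with hg
  set h : ℝ → ℂ := fun t => star v ⬝ᵥ B.mulVec (w t) with hh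
  -- differentiability of dot products with w
  have hdot : ∀ a : Fin n → ℂ, DifferentiableAt ℝ (fun t => a ⬝ᵥ w t) 0 := by
    intro a
    simp only [dotProduct]
    exact DifferentiableAt.fun_sum fun i _ =>
      (differentiableAt_const _).fun_mul ((differentiableAt_pi.1 hdw) i)
  have hdg : DifferentiableAt ℝ g 0 := hdot _
  have hdh : DifferentiableAt ℝ h 0 := by
    have : h = fun t => (star v ᵥ* B) ⬝ᵥ w t := by
      funext t; simp [hh, dotProduct_mulVec]
    rw [this]; exact hdot _
  -- g 0 = 1
  have hg0 : g 0 = 1 := by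
    have : g 0 = ((∑ i, ‖v i‖ ^ 2 : ℝ) : ℂ) := by
      simp only [hg, hw0, dotProduct, Pi.star_apply, Complex.ofReal_sum]
      refine Finset.sum_congr rfl fun i _ => ?_
      rw [show star (v i) = (starRingEnd ℂ) (v i) from rfl,
        ← Complex.normSq_eq_conj_mul_self, Complex.normSq_eq_norm_sq]
    rw [this, hv_norm, Complex.ofReal_one]
  -- star v ᵥ* M = μ • star v
  have hvM : star v ᵥ* M = (μ : ℂ) • star v := by
    have := congrArg star hv_eig
    rw [star_mulVec, hM.eq] at this
    rw [this, star_smul]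
    simp
  -- key identity: ((lam t : ℂ) - μ) * g t = t * h t near 0
  have key : ∀ t : ℝ, |t| < ε → ((lam t : ℂ) - μ) * g t = (t : ℂ) * h t := by
    intro t ht
    have e := congrArg (fun u => star v ⬝ᵥ u) (heig t ht)
    simp only [add_mulVec, dotProduct_add, dotProduct_smul, smul_eq_mul] at e
    have hsm : (t • B : Matrix (Fin n) (Fin n) ℂ) = ((t : ℂ)) • B := by
      ext i k; simp [Complex.real_smul]
    rw [hsm, smul_mulVec, dotProduct_smul, dotProduct_mulVec, hvM,
      smul_dotProduct, smul_eq_mul, smul_eq_mul] at e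
    simp only [hg, hh]
    linear_combination -e
  -- both sides as functions are eventually equal near 0
  have heq : (fun t => ((lam t : ℂ) - μ) * g t) =ᶠ[nhds 0] (fun t => (t : ℂ) * h t) := by
    have hmem : {t : ℝ | |t| < ε} ∈ nhds (0 : ℝ) := by
      have : Metric.ball (0 : ℝ) ε ∈ nhds (0 : ℝ) := Metric.ball_mem_nhds 0 hε
      simpa [Real.ball_eq_Ioo, abs_lt, Set.mem_Ioo, Set.Ioo_def] using this
    filter_upwards [hmem] with t ht using key t ht
  -- derivative of RHS at 0 is h 0
  have hR : HasDerivAt (fun t : ℝ => (t : ℂ) * h t) (h 0) 0 := by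
    have h1 : HasDerivAt (fun t : ℝ => (t : ℂ)) 1 0 := by
      simpa using (hasDerivAt_id (0 : ℝ)).ofReal_comp
    have := h1.fun_mul hdh.hasDerivAt
    simpa using this
  -- derivative of LHS at 0 is (deriv lam 0 : ℂ)
  have hL : HasDerivAt (fun t : ℝ => ((lam t : ℂ) - μ) * g t) ((deriv lam 0 : ℝ) : ℂ) 0 := by
    have h1 : HasDerivAt (fun t : ℝ => ((lam t : ℂ) - μ)) ((deriv lam 0 : ℝ) : ℂ) 0 :=
      (hdlam.hasDerivAt.ofReal_comp).sub_const _
    have := h1.fun_mul hdg.hasDerivAt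
    simpa [hlam0, hg0] using this
  have hL' : HasDerivAt (fun t : ℝ => ((lam t : ℂ) - μ) * g t) (h 0) 0 :=
    hR.congr_of_eventuallyEq heq
  have hmain : ((deriv lam 0 : ℝ) : ℂ) = h 0 := hL.unique hL'
  have h0 : h 0 = star v ⬝ᵥ B.mulVec v := by rw [hh]; simp [hw0]
  refine ⟨hmain.trans h0, ?_⟩
  intro Q _ j hQv
  rw [hmain.trans h0]
  simp only [mulVec, Matrix.mul_apply, conjTranspose_apply, dotProduct, Pi.star_apply, hQv,
    Finset.mul_sum, Finset.sum_mul]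
  rw [Finset.sum_comm]
  exact Finset.sum_congr rfl fun i _ => Finset.sum_congr rfl fun k _ => by ring
end

section
/- Second Hadamard variation formula: let M = QΛQ* be an n×n Hermitian matrix with simple spectrum, where Q is unitary and Λ = diag(λ₁,…,λₙ) with λ₁ < … < λₙ, and let B be Hermitian. Fix j and suppose λ : (−ε, ε) → ℝ and w : (−ε, ε) → ℂⁿ are twice differentiable at 0, with (M + tB) w(t) = λ(t) w(t), ‖w(t)‖ = 1 for all t, λ(0) = λ_j, w(0) = Q e_j. Then λ″(0) = 2 Σ_{k ≠ j} |(Q*BQ)_{kj}|² / (λ_j − λ_k). -/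
open Matrix

set_option maxHeartbeats 1000000

/-- Second Hadamard variation formula: let `M = QΛQ*` be Hermitian with simple spectrum
(`Λ = diag(λ₁ < … < λₙ)`, `Q` unitary), `B` Hermitian, and let `λ(t)`, `w(t)` be an
eigenvalue/unit-eigenvector family for `M + tB` twice differentiable at `0` with
`λ(0) = λ_j`, `w(0) = Q e_j`. Then
`λ″(0) = 2 Σ_{k ≠ j} |(Q* B Q)_{kj}|² / (λ_j − λ_k)`. -/
theorem second_hadamard_variation (n : ℕ) (lam : Fin n → ℝ) (hlam : StrictMono lam)
    (Q Λ M B : Matrix (Fin n) (Fin n) ℂ)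
    (hQ : Q ∈ Matrix.unitaryGroup (Fin n) ℂ)
    (hΛ : Λ = Matrix.diagonal fun i => (lam i : ℂ))
    (hM : M = Q * Λ * Qᴴ) (hB : B.IsHermitian)
    (j : Fin n) (ε : ℝ) (hε : 0 < ε)
    (lamt : ℝ → ℝ) (w : ℝ → Fin n → ℂ)
    (hl0 : lamt 0 = lam j) (hw0 : w 0 = fun i => Q i j)
    (heig : ∀ t : ℝ, |t| < ε → (M + t • B).mulVec (w t) = (lamt t : ℂ) • w t)
    (hnorm : ∀ t : ℝ, |t| < ε → ∑ i, ‖w t i‖ ^ 2 = 1)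
    (hd1 : ∀ t : ℝ, |t| < ε → DifferentiableAt ℝ lamt t)
    (hd1w : ∀ t : ℝ, |t| < ε → DifferentiableAt ℝ w t)
    (hd2 : DifferentiableAt ℝ (deriv lamt) 0)
    (hd2w : DifferentiableAt ℝ (deriv w) 0) :
    deriv (deriv lamt) 0 =
      2 * ∑ k ∈ Finset.univ.erase j, ‖(Qᴴ * B * Q) k j‖ ^ 2 / (lam j - lam k) := by
  have hQ1 : Qᴴ * Q = 1 := by
    have := Matrix.mem_unitaryGroup_iff'.mp hQ
    rwa [Matrix.star_eq_conjTranspose] at this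
  have hQ2 : Q * Qᴴ = 1 := by
    have := Matrix.mem_unitaryGroup_iff.mp hQ
    rwa [Matrix.star_eq_conjTranspose] at this
  set C : Matrix (Fin n) (Fin n) ℂ := Qᴴ * B * Q with hCdef
  set u : ℝ → Fin n → ℂ := deriv w with hudef
  set a : ℝ → ℝ := deriv lamt with hadef
  set v : ℝ → Fin n → ℂ := fun t k => ∑ i, Qᴴ k i * w t i with hvdef
  set V : ℝ → Fin n → ℂ := fun t k => ∑ i, Qᴴ k i * u t i with hVdef
  set V2 : Fin n → ℂ := fun k => ∑ i, Qᴴ k i * deriv u 0 i with hV2def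
  have h0ε : |(0:ℝ)| < ε := by simpa using hε
  have hev : ∀ t : ℝ, |t| < ε → ∀ᶠ s in nhds t, |s| < ε := by
    intro t ht
    exact (isOpen_lt continuous_abs continuous_const).eventually_mem ht
  -- the conjugated eigen-equation, componentwise
  have hbase : ∀ t : ℝ, |t| < ε → ∀ k,
      (lam k : ℂ) * v t k + (t : ℂ) * ∑ i, C k i * v t i = (lamt t : ℂ) * v t k := by
    intro t ht k
    have h := heig t ht
    have h2 : (Qᴴ * (M + t • B)) *ᵥ w t = (lamt t : ℂ) • (Qᴴ *ᵥ w t) := by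
      rw [← Matrix.mulVec_mulVec, h, Matrix.mulVec_smul]
    have h3 : Qᴴ * (M + t • B) = Λ * Qᴴ + t • (C * Qᴴ) := by
      rw [Matrix.mul_add, Matrix.mul_smul]
      congr 1
      · rw [hM, ← Matrix.mul_assoc, ← Matrix.mul_assoc, hQ1, Matrix.one_mul]
      · congr 1
        rw [hCdef, Matrix.mul_assoc, hQ2, Matrix.mul_one]
    rw [h3, Matrix.add_mulVec, Matrix.smul_mulVec, ← Matrix.mulVec_mulVec,
      ← Matrix.mulVec_mulVec] at h2
    have h4 := congrFun h2 k
    simp only [hΛ, Pi.add_apply, Pi.smul_apply, Complex.real_smul, smul_eq_mul,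
      Matrix.mulVec, dotProduct, Matrix.diagonal_apply, ite_mul, zero_mul,
      Finset.sum_ite_eq, Finset.mem_univ, if_true, hvdef] at h4 ⊢
    exact h4
  -- differentiability of components
  have hw' : ∀ t : ℝ, |t| < ε → HasDerivAt w (u t) t := by
    intro t ht; rw [hudef]; exact (hd1w t ht).hasDerivAt
  have hu' : HasDerivAt u (deriv u 0) 0 := hd2w.hasDerivAt
  have hvk : ∀ t : ℝ, |t| < ε → ∀ k, HasDerivAt (fun s => v s k) (V t k) t := by
    intro t ht k
    simp only [hvdef, hVdef]
    exact HasDerivAt.fun_sum fun i _ => (hasDerivAt_pi.mp (hw' t ht) i).const_mul _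
  have hVk : ∀ k, HasDerivAt (fun s => V s k) (V2 k) 0 := by
    intro k
    simp only [hVdef, hV2def]
    exact HasDerivAt.fun_sum fun i _ => (hasDerivAt_pi.mp hu' i).const_mul _
  have hla : ∀ t : ℝ, |t| < ε → HasDerivAt (fun s => ((lamt s : ℂ))) ((a t : ℂ)) t := by
    intro t ht; rw [hadef]; exact (hd1 t ht).hasDerivAt.ofReal_comp
  have ha2 : HasDerivAt (fun s => ((a s : ℂ))) (((deriv a 0 : ℝ) : ℂ)) 0 :=
    hd2.hasDerivAt.ofReal_comp
  have hid : ∀ t : ℝ, HasDerivAt (fun s : ℝ => (s : ℂ)) 1 t := by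
    intro t; simpa using (hasDerivAt_id t).ofReal_comp
  -- the differentiated eigen-equation, componentwise
  have hD : ∀ t : ℝ, |t| < ε → ∀ k,
      (lam k : ℂ) * V t k + ((∑ i, C k i * v t i) + (t : ℂ) * ∑ i, C k i * V t i) =
        (a t : ℂ) * v t k + (lamt t : ℂ) * V t k := by
    intro t ht k
    have hS : HasDerivAt (fun s => ∑ i, C k i * v s i) (∑ i, C k i * V t i) t :=
      HasDerivAt.fun_sum fun i _ => (hvk t ht i).const_mul _
    have hL : HasDerivAt (fun s => (lam k : ℂ) * v s k + (s : ℂ) * ∑ i, C k i * v s i)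
        ((lam k : ℂ) * V t k + (1 * (∑ i, C k i * v t i) + (t : ℂ) * ∑ i, C k i * V t i)) t :=
      ((hvk t ht k).const_mul _).add ((hid t).mul hS)
    have hR : HasDerivAt (fun s => ((lamt s : ℂ)) * v s k)
        ((a t : ℂ) * v t k + (lamt t : ℂ) * V t k) t := (hla t ht).mul (hvk t ht k)
    have heq : (fun s => ((lamt s : ℂ)) * v s k) =ᶠ[nhds t]
        (fun s => (lam k : ℂ) * v s k + (s : ℂ) * ∑ i, C k i * v s i) :=
      (hev t ht).mono fun s hs => (hbase s hs k).symm
    have h5 := hR.unique (heq.hasDerivAt_iff.mpr hL)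
    rw [one_mul] at h5
    exact h5.symm
  -- values at 0
  have hv0 : ∀ k, v 0 k = if k = j then 1 else 0 := by
    intro k
    simp only [hvdef]
    rw [hw0]
    rw [show (∑ i, Qᴴ k i * Q i j) = (Qᴴ * Q) k j from (Matrix.mul_apply).symm, hQ1,
      Matrix.one_apply]
  have hS0 : ∀ k, (∑ i, C k i * v 0 i) = C k j := by
    intro k
    simp [hv0, mul_ite]
  have hD0 : ∀ k, (lam k : ℂ) * V 0 k + C k j = (a 0 : ℂ) * v 0 k + (lam j : ℂ) * V 0 k := by
    intro k
    have h := hD 0 h0ε k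
    rw [hS0 k, hl0] at h
    simpa using h
  have haC : ((a 0 : ℝ) : ℂ) = C j j := by
    have h := hD0 j
    rw [hv0 j, if_pos rfl] at h
    linear_combination -h
  have hVoff : ∀ k, k ≠ j → ((lam j : ℂ) - (lam k : ℂ)) * V 0 k = C k j := by
    intro k hk
    have h := hD0 k
    rw [hv0 k, if_neg hk] at h
    linear_combination -h
  -- second derivative at 0, component j
  have hS'0 : HasDerivAt (fun s => ∑ i, C j i * v s i) (∑ i, C j i * V 0 i) 0 :=
    HasDerivAt.fun_sum fun i _ => (hvk 0 h0ε i).const_mul _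
  have hDS0 : HasDerivAt (fun s => ∑ i, C j i * V s i) (∑ i, C j i * V2 i) 0 :=
    HasDerivAt.fun_sum fun i _ => (hVk i).const_mul _
  have hF : HasDerivAt
      (fun s => (lam j : ℂ) * V s j + ((∑ i, C j i * v s i) + (s : ℂ) * ∑ i, C j i * V s i))
      ((lam j : ℂ) * V2 j + ((∑ i, C j i * V 0 i) +
        (1 * (∑ i, C j i * V 0 i) + ((0:ℝ) : ℂ) * ∑ i, C j i * V2 i))) 0 :=
    ((hVk j).const_mul _).add (hS'0.add ((hid 0).mul hDS0))
  have hG : HasDerivAt (fun s => ((a s : ℂ)) * v s j + ((lamt s : ℂ)) * V s j)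
      ((((deriv a 0 : ℝ) : ℂ)) * v 0 j + (a 0 : ℂ) * V 0 j +
        ((a 0 : ℂ) * V 0 j + (lamt 0 : ℂ) * V2 j)) 0 :=
    (ha2.mul (hvk 0 h0ε j)).add ((hla 0 h0ε).mul (hVk j))
  have heq2 : (fun s => ((a s : ℂ)) * v s j + ((lamt s : ℂ)) * V s j) =ᶠ[nhds 0]
      (fun s => (lam j : ℂ) * V s j + ((∑ i, C j i * v s i) + (s : ℂ) * ∑ i, C j i * V s i)) :=
    (hev 0 h0ε).mono fun s hs => (hD s hs j).symm
  have hE := hG.unique (heq2.hasDerivAt_iff.mpr hF)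
  rw [hv0 j, if_pos rfl, hl0] at hE
  -- extract λ''(0)
  have key : ((deriv a 0 : ℝ) : ℂ) = 2 * ∑ i ∈ Finset.univ.erase j, C j i * V 0 i := by
    have hsum : (∑ i, C j i * V 0 i) =
        C j j * V 0 j + ∑ i ∈ Finset.univ.erase j, C j i * V 0 i :=
      (Finset.add_sum_erase _ _ (Finset.mem_univ j)).symm
    rw [hsum] at hE
    rw [← haC] at hE
    push_cast at hE ⊢
    linear_combination hE
  -- Hermitian structure of C
  have hC : Cᴴ = C := by
    rw [hCdef, Matrix.conjTranspose_mul, Matrix.conjTranspose_mul, Matrix.conjTranspose_conjTranspose,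
      hB.eq, Matrix.mul_assoc]
  have hterm : ∀ i ∈ Finset.univ.erase j, C j i * V 0 i =
      ((‖C i j‖ ^ 2 / (lam j - lam i) : ℝ) : ℂ) := by
    intro i hi
    have hij : i ≠ j := Finset.ne_of_mem_erase hi
    have hne : (lam j - lam i : ℝ) ≠ 0 := sub_ne_zero.mpr (hlam.injective.ne (Ne.symm hij))
    have hneC : ((lam j : ℂ) - (lam i : ℂ)) ≠ 0 := by
      rw [← Complex.ofReal_sub]
      exact_mod_cast hne
    have hV : V 0 i = C i j / ((lam j : ℂ) - (lam i : ℂ)) := by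
      field_simp
      linear_combination hVoff i hij
    have hCji : C j i = starRingEnd ℂ (C i j) := by
      conv_lhs => rw [← hC]
      rw [Matrix.conjTranspose_apply]
      rfl
    rw [hV, hCji]
    rw [mul_div_assoc'] -- conj z * z / d
    have : starRingEnd ℂ (C i j) * C i j = ((‖C i j‖ ^ 2 : ℝ) : ℂ) := by
      rw [mul_comm, Complex.mul_conj]
      norm_cast
      rw [Complex.normSq_eq_norm_sq]
    rw [this]
    push_cast
    ring
  rw [Finset.sum_congr rfl hterm] at key
  have final : ((deriv a 0 : ℝ) : ℂ) =
      ((2 * ∑ k ∈ Finset.univ.erase j, ‖C k j‖ ^ 2 / (lam j - lam k) : ℝ) : ℂ) := by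
    rw [key]
    push_cast
    ring
  exact_mod_cast final
end

section
/- Mean curvature of the isospectral orbit: let Λ = diag(λ₁,…,λₙ) with λ₁ < … < λₙ. For 1 ≤ k < l ≤ n set A_{kl} = (λ_l−λ_k)⁻¹ E_{kl} and B_{kl} = i(λ_l−λ_k)⁻¹ e_{kl}, where E_{kl} = (e_k⊗e_l − e_l⊗e_k)/√2 and e_{kl} = (e_k⊗e_l + e_l⊗e_k)/√2 (these are the anti-Hermitian generators of the orthonormal tangent basis of the isospectral orbit at Λ). Let D(H) denote the diagonal part of a matrix H. Then Σ_{1 ≤ k < l ≤ n} [ D([A_{kl}, [A_{kl}, Λ]]) + D([B_{kl}, [B_{kl}, Λ]]) ] = 2 Σ_{k=1}^{n} ( Σ_{l ≠ k} 1/(λ_l − λ_k) ) e_k⊗e_k. (The left-hand side is the trace of the second fundamental form of the isospectral orbit Σ_Λ ⊂ H(n) at Λ, i.e. the mean curvature vector H_Λ.) -/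
open Matrix

section aux

lemma diag_mul_std {n : ℕ} (d : Fin n → ℂ) (k l : Fin n) (a : ℂ) :
    Matrix.diagonal d * Matrix.single k l a = Matrix.single k l (d k * a) := by
  ext i j
  simp [Matrix.mul_apply, Matrix.single, Matrix.diagonal_apply, Finset.sum_ite_eq, ite_and]
  aesop

lemma std_mul_diag {n : ℕ} (d : Fin n → ℂ) (k l : Fin n) (a : ℂ) :
    Matrix.single k l a * Matrix.diagonal d = Matrix.single k l (a * d l) := by
  ext i j
  simp [Matrix.mul_apply, Matrix.single, Matrix.diagonal_apply, Finset.sum_ite_eq, ite_and]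
  aesop

lemma core_generic {n : ℕ} (k l : Fin n) (hkl : k ≠ l) (μ : Fin n → ℂ) (r : ℂ) (e : ℂ)
    (P : Matrix (Fin n) (Fin n) ℂ)
    (hP : P = r • (Matrix.single k l (1:ℂ) + Matrix.single l k e)) :
    P * (P * Matrix.diagonal μ - Matrix.diagonal μ * P)
      - (P * Matrix.diagonal μ - Matrix.diagonal μ * P) * P
    = (-2 * r ^ 2 * e * (μ l - μ k)) •
        (Matrix.single k k (1:ℂ) - Matrix.single l l 1) := by
  subst hP
  simp only [smul_mul_assoc, mul_smul_comm, smul_add, smul_sub, add_mul, mul_add, sub_mul,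
    mul_sub, std_mul_diag, diag_mul_std, Matrix.single_mul_single_same, smul_smul]
  simp only [Matrix.single_mul_single_of_ne _ k l _ hkl.symm,
    Matrix.single_mul_single_of_ne _ l k _ hkl]
  ext i j
  simp only [Matrix.sub_apply, Matrix.add_apply, Matrix.smul_apply, Matrix.single,
    Matrix.of_apply, smul_eq_mul, Matrix.zero_apply]
  split_ifs <;> ring

lemma real_smul_mat {n : ℕ} (x : ℝ) (M : Matrix (Fin n) (Fin n) ℂ) :
    x • M = ((x : ℂ)) • M := by
  ext i j
  simp [Matrix.smul_apply, Complex.real_smul]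

lemma coeff_real {d : ℝ} :
    2 * ((d⁻¹ * (Real.sqrt 2)⁻¹) ^ 2) * d = d⁻¹ := by
  have h2 : (Real.sqrt 2) ^ 2 = 2 := Real.sq_sqrt (by norm_num)
  rw [mul_pow, inv_pow, inv_pow, h2]
  rcases eq_or_ne d 0 with h | h
  · simp [h]
  · field_simp

lemma pair_lemma {n : ℕ} (lam : Fin n → ℝ) (k l : Fin n) (hkl : k ≠ l)
    (AA BB : Matrix (Fin n) (Fin n) ℂ)
    (hAA : AA = ((lam l - lam k)⁻¹ : ℝ) • ((Real.sqrt 2)⁻¹ •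
      (Matrix.single k l (1 : ℂ) - Matrix.single l k 1)))
    (hBB : BB = Complex.I • (((lam l - lam k)⁻¹ : ℝ) • ((Real.sqrt 2)⁻¹ •
      (Matrix.single k l (1 : ℂ) + Matrix.single l k 1)))) :
    (Matrix.diagonal fun i =>
        (AA * (AA * Matrix.diagonal (fun i => (lam i : ℂ)) - Matrix.diagonal (fun i => (lam i : ℂ)) * AA)
          - (AA * Matrix.diagonal (fun i => (lam i : ℂ)) - Matrix.diagonal (fun i => (lam i : ℂ)) * AA) * AA) i i)
    + (Matrix.diagonal fun i =>
        (BB * (BB * Matrix.diagonal (fun i => (lam i : ℂ)) - Matrix.diagonal (fun i => (lam i : ℂ)) * BB)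
          - (BB * Matrix.diagonal (fun i => (lam i : ℂ)) - Matrix.diagonal (fun i => (lam i : ℂ)) * BB) * BB) i i)
    = Matrix.diagonal fun i =>
        ((2 * (lam l - lam k)⁻¹ : ℝ) : ℂ) *
          ((if k = i then 1 else 0) - (if l = i then 1 else 0)) := by
  have hr : ∀ (M : Matrix (Fin n) (Fin n) ℂ),
      ((lam l - lam k)⁻¹ : ℝ) • ((Real.sqrt 2)⁻¹ • M)
        = ((((lam l - lam k)⁻¹ * (Real.sqrt 2)⁻¹ : ℝ) : ℂ)) • M := by
    intro M
    rw [real_smul_mat, real_smul_mat, smul_smul]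
    push_cast
    ring_nf
  have hAA' : AA = ((((lam l - lam k)⁻¹ * (Real.sqrt 2)⁻¹ : ℝ) : ℂ)) •
      (Matrix.single k l (1 : ℂ) + Matrix.single l k (-1)) := by
    rw [hAA, hr]
    congr 1
    rw [sub_eq_add_neg]
    congr 1
    ext i j
    simp [Matrix.single]
    aesop
  have hBB' : BB = (Complex.I * (((lam l - lam k)⁻¹ * (Real.sqrt 2)⁻¹ : ℝ) : ℂ)) •
      (Matrix.single k l (1 : ℂ) + Matrix.single l k 1) := by
    rw [hBB, hr, smul_smul]
  rw [core_generic k l hkl _ _ (-1) _ hAA', core_generic k l hkl _ _ 1 _ hBB']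
  have hc : (-2 * ((((lam l - lam k)⁻¹ * (Real.sqrt 2)⁻¹ : ℝ) : ℂ)) ^ 2 * (-1) *
      ((lam l : ℂ) - (lam k : ℂ)) : ℂ) = (((lam l - lam k)⁻¹ : ℝ) : ℂ) := by
    have := coeff_real (d := lam l - lam k)
    calc (-2 * ((((lam l - lam k)⁻¹ * (Real.sqrt 2)⁻¹ : ℝ) : ℂ)) ^ 2 * (-1) *
        ((lam l : ℂ) - (lam k : ℂ)) : ℂ)
        = ((2 * (((lam l - lam k)⁻¹ * (Real.sqrt 2)⁻¹ : ℝ)) ^ 2 * (lam l - lam k) : ℝ) : ℂ) := by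
          push_cast; ring
      _ = (((lam l - lam k)⁻¹ : ℝ) : ℂ) := by rw [this]
  have hcB : (-2 * (Complex.I * (((lam l - lam k)⁻¹ * (Real.sqrt 2)⁻¹ : ℝ) : ℂ)) ^ 2 * 1 *
      ((lam l : ℂ) - (lam k : ℂ)) : ℂ) = (((lam l - lam k)⁻¹ : ℝ) : ℂ) := by
    rw [mul_pow, Complex.I_sq]
    rw [← hc]
    ring
  ext i j
  rcases eq_or_ne i j with rfl | hij
  · simp only [Matrix.add_apply, Matrix.diagonal_apply_eq, Matrix.smul_apply, Matrix.sub_apply,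
      Matrix.single, Matrix.of_apply, smul_eq_mul, and_self]
    rw [hc, hcB]
    push_cast
    ring
  · simp [Matrix.diagonal_apply_ne _ hij]
end aux

section scal

lemma sum_pairs_real {n : ℕ} (lam : Fin n → ℝ) (k : Fin n) :
    ∑ p ∈ Finset.univ.filter (fun p : Fin n × Fin n => p.1 < p.2),
        (2 * (lam p.2 - lam p.1)⁻¹) *
          ((if p.1 = k then (1:ℝ) else 0) - (if p.2 = k then 1 else 0))
      = 2 * ∑ l ∈ Finset.univ.erase k, (lam l - lam k)⁻¹ := by
  rw [Finset.sum_filter, Fintype.sum_prod_type]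
  have point : ∀ a b : Fin n,
      (if a < b then (2 * (lam b - lam a)⁻¹) *
          ((if a = k then (1:ℝ) else 0) - (if b = k then 1 else 0)) else 0)
      = (if a = k then (if a < b then 2 * (lam b - lam a)⁻¹ else 0) else 0)
        - (if b = k then (if a < b then 2 * (lam b - lam a)⁻¹ else 0) else 0) := by
    intro a b
    split_ifs <;> ring
  simp only [point]
  simp only [Finset.sum_sub_distrib]
  have h1 : ∀ a : Fin n, (∑ b : Fin n, if a = k then (if a < b then 2 * (lam b - lam a)⁻¹ else 0) else 0)
      = if a = k then (∑ b : Fin n, if a < b then 2 * (lam b - lam a)⁻¹ else 0) else 0 := by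
    intro a
    by_cases h : a = k <;> simp [h]
  have h2 : ∀ a : Fin n, (∑ b : Fin n, if b = k then (if a < b then 2 * (lam b - lam a)⁻¹ else 0) else 0)
      = (if a < k then 2 * (lam k - lam a)⁻¹ else 0) := by
    intro a
    rw [Finset.sum_ite_eq' Finset.univ k (fun b => if a < b then 2 * (lam b - lam a)⁻¹ else 0)]
    simp
  simp only [h1, h2]
  rw [Finset.sum_ite_eq' Finset.univ k
    (fun a => ∑ b : Fin n, if a < b then 2 * (lam b - lam a)⁻¹ else 0)]
  simp only [Finset.mem_univ, if_true]
  rw [Finset.mul_sum]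
  have key : ∑ l : Fin n, (if l = k then (0:ℝ) else 2 * (lam l - lam k)⁻¹)
      = ∑ l ∈ Finset.univ.erase k, 2 * (lam l - lam k)⁻¹ := by
    rw [← Finset.add_sum_erase _ _ (Finset.mem_univ k), if_pos rfl, zero_add]
    exact Finset.sum_congr rfl fun l hl => if_neg (Finset.mem_erase.mp hl).1
  rw [← key, ← Finset.sum_sub_distrib]
  refine Finset.sum_congr rfl fun l _ => ?_
  rcases lt_trichotomy l k with h | rfl | h
  · rw [if_neg (not_lt.2 h.le), if_pos h, if_neg h.ne]
    rw [show lam l - lam k = -(lam k - lam l) by ring, inv_neg]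
    ring
  · simp [lt_irrefl]
  · rw [if_pos h, if_neg (not_lt.2 h.le), if_neg h.ne']
    ring

end scal

lemma diag_sum {n : ℕ} {ι : Type*} (s : Finset ι) (f : ι → Fin n → ℂ) :
    ∑ p ∈ s, Matrix.diagonal (f p) = Matrix.diagonal (fun i => ∑ p ∈ s, f p i) := by
  ext i j
  rcases eq_or_ne i j with rfl | h
  · simp [Matrix.sum_apply]
  · simp [Matrix.sum_apply, Matrix.diagonal_apply_ne _ h]

/-- Mean curvature of the isospectral orbit: with `Λ = diag(λ₁ < … < λₙ)`,
`A_{kl} = (λ_l−λ_k)⁻¹ E_{kl}` and `B_{kl} = i(λ_l−λ_k)⁻¹ e_{kl}` (the anti-Hermitian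
generators of the orthonormal tangent basis), and `D(H)` the diagonal part of `H`, one
has `Σ_{k<l} ( D([A_{kl},[A_{kl},Λ]]) + D([B_{kl},[B_{kl},Λ]]) )
= 2 Σ_k ( Σ_{l≠k} 1/(λ_l − λ_k) ) e_k⊗e_k`. -/
theorem mean_curvature_of_isospectral_orbit (n : ℕ) (lam : Fin n → ℝ)
    (hlam : StrictMono lam)
    (Λ : Matrix (Fin n) (Fin n) ℂ)
    (hΛ : Λ = Matrix.diagonal fun i => (lam i : ℂ))
    (A B : Fin n → Fin n → Matrix (Fin n) (Fin n) ℂ)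
    (hA : ∀ k l, A k l = ((lam l - lam k)⁻¹ : ℝ) • ((Real.sqrt 2)⁻¹ •
      (Matrix.single k l (1 : ℂ) - Matrix.single l k 1)))
    (hB : ∀ k l, B k l = Complex.I • (((lam l - lam k)⁻¹ : ℝ) • ((Real.sqrt 2)⁻¹ •
      (Matrix.single k l (1 : ℂ) + Matrix.single l k 1))))
    (D : Matrix (Fin n) (Fin n) ℂ → Matrix (Fin n) (Fin n) ℂ)
    (hD : ∀ H, D H = Matrix.diagonal fun i => H i i) :
    ∑ p ∈ Finset.univ.filter (fun p : Fin n × Fin n => p.1 < p.2),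
        (D (A p.1 p.2 * (A p.1 p.2 * Λ - Λ * A p.1 p.2)
            - (A p.1 p.2 * Λ - Λ * A p.1 p.2) * A p.1 p.2)
          + D (B p.1 p.2 * (B p.1 p.2 * Λ - Λ * B p.1 p.2)
            - (B p.1 p.2 * Λ - Λ * B p.1 p.2) * B p.1 p.2))
      = Matrix.diagonal fun k =>
          ((2 * ∑ l ∈ Finset.univ.erase k, (lam l - lam k)⁻¹ : ℝ) : ℂ) := by
  subst hΛ
  have step : ∀ p ∈ Finset.univ.filter (fun p : Fin n × Fin n => p.1 < p.2),
      (D (A p.1 p.2 * (A p.1 p.2 * Matrix.diagonal (fun i => (lam i : ℂ))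
            - Matrix.diagonal (fun i => (lam i : ℂ)) * A p.1 p.2)
          - (A p.1 p.2 * Matrix.diagonal (fun i => (lam i : ℂ))
            - Matrix.diagonal (fun i => (lam i : ℂ)) * A p.1 p.2) * A p.1 p.2)
        + D (B p.1 p.2 * (B p.1 p.2 * Matrix.diagonal (fun i => (lam i : ℂ))
            - Matrix.diagonal (fun i => (lam i : ℂ)) * B p.1 p.2)
          - (B p.1 p.2 * Matrix.diagonal (fun i => (lam i : ℂ))
            - Matrix.diagonal (fun i => (lam i : ℂ)) * B p.1 p.2) * B p.1 p.2))
      = Matrix.diagonal (fun i => ((2 * (lam p.2 - lam p.1)⁻¹ : ℝ) : ℂ) *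
          ((if p.1 = i then 1 else 0) - (if p.2 = i then 1 else 0))) := by
    intro p hp
    have hlt : p.1 < p.2 := (Finset.mem_filter.mp hp).2
    rw [hD, hD]
    exact pair_lemma lam p.1 p.2 (ne_of_lt hlt) _ _ (hA _ _) (hB _ _)
  rw [Finset.sum_congr rfl step, _root_.diag_sum]
  refine congrArg Matrix.diagonal (funext fun k => ?_)
  have hterm : ∀ p : Fin n × Fin n,
      ((2 * (lam p.2 - lam p.1)⁻¹ : ℝ) : ℂ) *
          ((if p.1 = k then 1 else 0) - (if p.2 = k then 1 else 0))
        = (((2 * (lam p.2 - lam p.1)⁻¹) *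
            ((if p.1 = k then (1:ℝ) else 0) - (if p.2 = k then 1 else 0)) : ℝ) : ℂ) := by
    intro p
    push_cast [apply_ite (Complex.ofReal)]
    ring
  simp only [hterm]
  rw [← Complex.ofReal_sum]
  rw [sum_pairs_real]
end

section
/- Global existence for the Coulomb repulsion ODE: let λ⁰ = (λ⁰₁,…,λ⁰ₙ) lie in the open Weyl chamber W_n = {λ ∈ ℝⁿ : λ₁ < λ₂ < … < λₙ}. Then there exists a unique continuously differentiable function λ : [0,∞) → W_n with λ(0) = λ⁰ satisfying, for each j and all t ≥ 0, λ_j′(t) = Σ_{k ≠ j} 1/(λ_j(t) − λ_k(t)); in particular the eigenvalue trajectories never collide and are defined for all time. -/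
open Set Finset
open scoped NNReal

namespace CoulombODE


variable {n : ℕ}

/-- The Coulomb repulsion vector field. -/
noncomputable def F (x : Fin n → ℝ) : Fin n → ℝ :=
  fun j => ∑ k ∈ Finset.univ.erase j, (x j - x k)⁻¹

/-- All (ordered) pairwise gaps at least `δ`. -/
def Pgap (δ : ℝ) (x : Fin n → ℝ) : Prop := ∀ j k : Fin n, j < k → δ ≤ x k - x j

lemma Pgap.strictMono {δ : ℝ} (hδ : 0 < δ) {x : Fin n → ℝ} (h : Pgap δ x) : StrictMono x := by
  intro j k hjk
  have := h j k hjk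
  linarith

lemma Pgap.mono {δ δ' : ℝ} (hδ : δ' ≤ δ) {x : Fin n → ℝ} (h : Pgap δ x) : Pgap δ' x :=
  fun j k hjk => le_trans hδ (h j k hjk)

lemma Pgap.le_abs {δ : ℝ} {x : Fin n → ℝ} (h : Pgap δ x) {j k : Fin n} (hjk : j ≠ k) :
    δ ≤ |x j - x k| := by
  rcases lt_or_gt_of_ne hjk with hlt | hlt
  · have := h j k hlt
    rw [abs_sub_comm]
    exact this.trans (le_abs_self _)
  · exact (h k j hlt).trans (le_abs_self _)

lemma Pgap.convex (δ : ℝ) : Convex ℝ {x : Fin n → ℝ | Pgap δ x} := by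
  intro x hx y hy a b ha hb hab
  intro j k hjk
  have hx' := hx j k hjk
  have hy' := hy j k hjk
  have h1 : a * δ + b * δ ≤ a * (x k - x j) + b * (y k - y j) := by gcongr
  have h2 : a * δ + b * δ = δ := by rw [← add_mul, hab, one_mul]
  simp only [Pi.add_apply, Pi.smul_apply, smul_eq_mul]
  linarith

lemma Pgap.closedBall {δ : ℝ} {x : Fin n → ℝ} (h : Pgap δ x) {y : Fin n → ℝ} {r : ℝ}
    (hy : y ∈ Metric.closedBall x r) : Pgap (δ - 2 * r) y := by
  intro j k hjk
  have hj : dist (y j) (x j) ≤ r := (dist_le_pi_dist y x j).trans (Metric.mem_closedBall.mp hy)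
  have hk : dist (y k) (x k) ≤ r := (dist_le_pi_dist y x k).trans (Metric.mem_closedBall.mp hy)
  rw [Real.dist_eq] at hj hk
  have h1 := h j k hjk
  have hj' := _root_.abs_le.mp hj
  have hk' := _root_.abs_le.mp hk
  have := hj'.1; have := hj'.2; have := hk'.1; have := hk'.2
  linarith


lemma norm_F_le {δ : ℝ} (hδ : 0 < δ) {x : Fin n → ℝ} (h : Pgap δ x) :
    ‖F x‖ ≤ n / δ := by
  rw [pi_norm_le_iff_of_nonneg (by positivity)]
  intro j
  calc ‖F x j‖ ≤ ∑ k ∈ Finset.univ.erase j, ‖(x j - x k)⁻¹‖ := norm_sum_le _ _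
    _ ≤ ∑ _k ∈ Finset.univ.erase j, 1 / δ := by
        apply Finset.sum_le_sum
        intro k hk
        have h1 : δ ≤ |x j - x k| := h.le_abs (fun hh => (Finset.mem_erase.mp hk).1 hh.symm)
        rw [Real.norm_eq_abs, abs_inv, one_div]
        exact inv_anti₀ hδ h1
    _ ≤ n / δ := by
        rw [Finset.sum_const, nsmul_eq_mul]
        have hcard : ((Finset.univ.erase j).card : ℝ) ≤ n := by
          calc ((Finset.univ.erase j).card : ℝ) ≤ (Finset.univ : Finset (Fin n)).card := by
                exact_mod_cast Finset.card_le_card (Finset.erase_subset _ _)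
            _ = n := by simp
        calc ((Finset.univ.erase j).card : ℝ) * (1 / δ) ≤ (n : ℝ) * (1 / δ) := by
              gcongr
          _ = n / δ := by ring

lemma lipschitzOnWith_F {δ : ℝ} (hδ : 0 < δ) :
    LipschitzOnWith (Real.toNNReal (2 * n / δ ^ 2)) (F (n := n)) {x | Pgap δ x} := by
  apply LipschitzOnWith.of_dist_le_mul
  intro x hx y hy
  have hK : ((Real.toNNReal (2 * n / δ ^ 2) : ℝ≥0) : ℝ) = 2 * n / δ ^ 2 :=
    Real.coe_toNNReal _ (by positivity)
  rw [hK]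
  rw [dist_pi_le_iff (by positivity)]
  intro j
  have key : ∀ k : Fin n, k ≠ j → dist ((x j - x k)⁻¹) ((y j - y k)⁻¹) ≤ 2 / δ ^ 2 * dist x y := by
    intro k hk
    have hxjk : δ ≤ |x j - x k| := hx.le_abs (Ne.symm hk)
    have hyjk : δ ≤ |y j - y k| := hy.le_abs (Ne.symm hk)
    have hxne : x j - x k ≠ 0 := by
      intro hh; rw [hh] at hxjk; simp at hxjk; linarith
    have hyne : y j - y k ≠ 0 := by
      intro hh; rw [hh] at hyjk; simp at hyjk; linarith
    rw [Real.dist_eq]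
    have heq : (x j - x k)⁻¹ - (y j - y k)⁻¹ =
        ((y j - y k) - (x j - x k)) / ((x j - x k) * (y j - y k)) := by
      field_simp
    rw [heq, abs_div, abs_mul]
    have hnum : |(y j - y k) - (x j - x k)| ≤ 2 * dist x y := by
      have h1 : |y j - x j| ≤ dist x y := by
        rw [abs_sub_comm]; rw [← Real.dist_eq]; exact dist_le_pi_dist x y j
      have h2 : |y k - x k| ≤ dist x y := by
        rw [abs_sub_comm]; rw [← Real.dist_eq]; exact dist_le_pi_dist x y k
      calc |(y j - y k) - (x j - x k)| = |(y j - x j) - (y k - x k)| := by ring_nf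
        _ ≤ |y j - x j| + |y k - x k| := abs_sub _ _
        _ ≤ 2 * dist x y := by linarith
    have hden : δ ^ 2 ≤ |x j - x k| * |y j - y k| := by
      calc δ ^ 2 = δ * δ := sq δ
        _ ≤ |x j - x k| * |y j - y k| := by
            apply mul_le_mul hxjk hyjk hδ.le (abs_nonneg _)
    calc |(y j - y k) - (x j - x k)| / (|x j - x k| * |y j - y k|)
        ≤ 2 * dist x y / δ ^ 2 := by
          apply div_le_div₀ (by positivity) hnum (by positivity) hden
      _ = 2 / δ ^ 2 * dist x y := by ring
  calc dist (F x j) (F y j) = ‖∑ k ∈ Finset.univ.erase j, ((x j - x k)⁻¹ - (y j - y k)⁻¹)‖ := by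
        rw [dist_eq_norm, F, F, ← Finset.sum_sub_distrib]
    _ ≤ ∑ k ∈ Finset.univ.erase j, ‖(x j - x k)⁻¹ - (y j - y k)⁻¹‖ := norm_sum_le _ _
    _ ≤ ∑ _k ∈ Finset.univ.erase j, 2 / δ ^ 2 * dist x y := by
        apply Finset.sum_le_sum
        intro k hk
        rw [Real.norm_eq_abs, ← Real.dist_eq]
        exact key k (Finset.mem_erase.mp hk).1
    _ ≤ 2 * n / δ ^ 2 * dist x y := by
        rw [Finset.sum_const, nsmul_eq_mul]
        have hcard : ((Finset.univ.erase j).card : ℝ) ≤ n := by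
          calc ((Finset.univ.erase j).card : ℝ) ≤ (Finset.univ : Finset (Fin n)).card := by
                exact_mod_cast Finset.card_le_card (Finset.erase_subset _ _)
            _ = n := by simp
        have hnn : (0:ℝ) ≤ 2 / δ ^ 2 * dist x y := by positivity
        calc ((Finset.univ.erase j).card : ℝ) * (2 / δ ^ 2 * dist x y)
            ≤ (n : ℝ) * (2 / δ ^ 2 * dist x y) := mul_le_mul_of_nonneg_right hcard hnn
          _ = 2 * n / δ ^ 2 * dist x y := by ring

/-- Swapping the two indices in a double sum over distinct pairs. -/
lemma sum_swap_erase (g : Fin n → Fin n → ℝ) :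
    ∑ j, ∑ k ∈ Finset.univ.erase j, g j k = ∑ j, ∑ k ∈ Finset.univ.erase j, g k j := by
  exact Finset.sum_comm' (by
    intro x y
    simp only [Finset.mem_univ, Finset.mem_erase, true_and, and_true, ne_eq]
    constructor
    · intro h; exact fun hh => h hh.symm
    · intro h; exact fun hh => h hh.symm)

/-- `∑_j x_j F_j = n(n-1)/2` (times 2, stated without division). -/
lemma sum_mul_F (x : Fin n → ℝ) (hx : Function.Injective x) :
    2 * ∑ j, x j * F x j = (n * (n - 1) : ℕ) := by
  have hS : ∑ j, x j * F x j = ∑ j, ∑ k ∈ Finset.univ.erase j, x j * (x j - x k)⁻¹ := by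
    apply Finset.sum_congr rfl
    intro j _
    rw [F, Finset.mul_sum]
  have hswap := sum_swap_erase (n := n) (fun j k => x j * (x j - x k)⁻¹)
  have key : (∑ j : Fin n, ∑ k ∈ Finset.univ.erase j, x j * (x j - x k)⁻¹)
      + (∑ j : Fin n, ∑ k ∈ Finset.univ.erase j, x k * (x k - x j)⁻¹)
      = ∑ j : Fin n, ∑ k ∈ Finset.univ.erase j, (1 : ℝ) := by
    rw [← Finset.sum_add_distrib]
    apply Finset.sum_congr rfl
    intro j _
    rw [← Finset.sum_add_distrib]
    apply Finset.sum_congr rfl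
    intro k hk
    have hne : x j ≠ x k := fun hh => (Finset.mem_erase.mp hk).1 (hx hh).symm
    have h1 : x j - x k ≠ 0 := sub_ne_zero.mpr hne
    have h2 : x k - x j ≠ 0 := sub_ne_zero.mpr (Ne.symm hne)
    field_simp
    ring
  have hcount : ∑ j : Fin n, ∑ _k ∈ Finset.univ.erase j, (1 : ℝ) = (n * (n - 1) : ℕ) := by
    simp only [Finset.sum_const, nsmul_eq_mul, mul_one]
    rw [Finset.sum_congr rfl (fun j _ => by
      rw [Finset.card_erase_of_mem (Finset.mem_univ j), Finset.card_univ, Fintype.card_fin])]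
    simp [Finset.sum_const, Finset.card_univ, mul_comm]
  rw [hS, two_mul]
  nth_rewrite 2 [hswap]
  rw [key, hcount]

/-- The derivative of `Φ` along the flow is `2 ∑ F_j²`. -/
lemma sum_logderiv (x : Fin n → ℝ) :
    ∑ j, ∑ k ∈ Finset.univ.erase j, (F x k - F x j) / (x k - x j)
      = 2 * ∑ j, (F x j) ^ 2 := by
  have split : ∑ j, ∑ k ∈ Finset.univ.erase j, (F x k - F x j) / (x k - x j)
      = (∑ j, ∑ k ∈ Finset.univ.erase j, F x k / (x k - x j))
        - ∑ j, ∑ k ∈ Finset.univ.erase j, F x j / (x k - x j) := by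
    rw [← Finset.sum_sub_distrib]
    apply Finset.sum_congr rfl
    intro j _
    rw [← Finset.sum_sub_distrib]
    exact Finset.sum_congr rfl (fun k _ => sub_div _ _ _)
  have hsw : ∑ j, ∑ k ∈ Finset.univ.erase j, F x j / (x k - x j)
      = ∑ j, ∑ k ∈ Finset.univ.erase j, F x k / (x j - x k) :=
    sum_swap_erase (fun j k => F x j / (x k - x j))
  have hneg : (∑ j : Fin n, ∑ k ∈ Finset.univ.erase j, F x k / (x j - x k))
      + ∑ j : Fin n, ∑ k ∈ Finset.univ.erase j, F x k / (x k - x j) = 0 := by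
    rw [← Finset.sum_add_distrib]
    rw [Finset.sum_eq_zero]
    intro j _
    rw [← Finset.sum_add_distrib]
    apply Finset.sum_eq_zero
    intro k _
    have hh : x j - x k = -(x k - x j) := by ring
    rw [hh, div_neg]
    ring
  have hmain : ∑ j : Fin n, ∑ k ∈ Finset.univ.erase j, F x k / (x k - x j)
      = ∑ j : Fin n, (F x j) ^ 2 := by
    rw [sum_swap_erase (fun j k => F x k / (x k - x j))]
    apply Finset.sum_congr rfl
    intro j _
    rw [sq, F, Finset.mul_sum]
    apply Finset.sum_congr rfl
    intro k _
    rw [div_eq_mul_inv]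
  rw [split, hsw]
  linarith [hneg, hmain]

variable (lam0 : Fin n → ℝ)

/-- Solution predicate on `[0, T]`. -/
def Sol (T : ℝ) (γ : ℝ → Fin n → ℝ) : Prop :=
  γ 0 = lam0 ∧ ∀ t ∈ Icc (0:ℝ) T, StrictMono (γ t) ∧
    HasDerivWithinAt γ (F (γ t)) (Icc (0:ℝ) T) t

noncomputable def q0 : ℝ := ∑ j, lam0 j ^ 2
noncomputable def cgrow : ℝ := ((n * (n - 1) : ℕ) : ℝ)
noncomputable def phi0 : ℝ := ∑ j : Fin n, ∑ k ∈ Finset.univ.erase j, Real.log (lam0 k - lam0 j)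
noncomputable def Mb (T : ℝ) : ℝ := Real.sqrt (q0 lam0 + cgrow (n := n) * T)
noncomputable def Db (T : ℝ) : ℝ := 2 * Mb lam0 T + 1
noncomputable def delt (T : ℝ) : ℝ :=
  Real.exp (phi0 lam0 - ((n * n + n : ℕ) : ℝ) * Real.log (Db lam0 T))

variable {lam0}

lemma delt_pos (T : ℝ) : 0 < delt lam0 T := Real.exp_pos _

lemma q0_nonneg : 0 ≤ q0 lam0 := Finset.sum_nonneg fun j _ => sq_nonneg _

lemma cgrow_nonneg : 0 ≤ cgrow (n := n) := Nat.cast_nonneg _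

lemma Mb_nonneg (T : ℝ) : 0 ≤ Mb lam0 T := Real.sqrt_nonneg _

lemma Db_ge_one (T : ℝ) : 1 ≤ Db lam0 T := by
  have := Mb_nonneg (lam0 := lam0) T
  unfold Db; linarith

lemma Mb_mono {S T : ℝ} (h : S ≤ T) : Mb lam0 S ≤ Mb lam0 T := by
  apply Real.sqrt_le_sqrt
  have := cgrow_nonneg (n := n)
  nlinarith

lemma delt_anti {S T : ℝ} (h : S ≤ T) : delt lam0 T ≤ delt lam0 S := by
  apply Real.exp_le_exp.mpr
  have h1 : Real.log (Db lam0 S) ≤ Real.log (Db lam0 T) := by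
    apply Real.log_le_log (by linarith [Db_ge_one (lam0 := lam0) S])
    have := Mb_mono (lam0 := lam0) h
    unfold Db; linarith
  have h2 : (0:ℝ) ≤ ((n * n + n : ℕ) : ℝ) := Nat.cast_nonneg _
  nlinarith

/-- A priori estimates: any solution on `[0, T]` stays bounded by `Mb` and keeps
pairwise gaps at least `delt`. -/
theorem apriori {T : ℝ} (hT : 0 ≤ T) {γ : ℝ → Fin n → ℝ} (hγ : Sol lam0 T γ) :
    ∀ t ∈ Icc (0:ℝ) T, (∀ j, |γ t j| ≤ Mb lam0 T) ∧ Pgap (delt lam0 T) (γ t) := by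
  obtain ⟨hγ0, hγ'⟩ := hγ
  have hcomp : ∀ t ∈ Icc (0:ℝ) T, ∀ j,
      HasDerivWithinAt (fun s => γ s j) (F (γ t) j) (Icc (0:ℝ) T) t :=
    fun t ht j => (hasDerivWithinAt_pi.mp (hγ' t ht).2) j
  -- the quantity q(t) = ∑ γ_j(t)²
  set q : ℝ → ℝ := fun t => ∑ j, (γ t j) ^ 2 with hq_def
  have hq : ∀ t ∈ Icc (0:ℝ) T, HasDerivWithinAt q (cgrow (n := n)) (Icc (0:ℝ) T) t := by
    intro t ht
    have h1 : HasDerivWithinAt q (∑ j, (2:ℝ) * γ t j ^ 1 * F (γ t) j) (Icc (0:ℝ) T) t := by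
      apply HasDerivWithinAt.fun_sum
      intro j _
      simpa using (hcomp t ht j).fun_pow (n := 2)
    have h2 : (∑ j, (2:ℝ) * γ t j ^ 1 * F (γ t) j) = cgrow (n := n) := by
      have := sum_mul_F (γ t) ((hγ' t ht).1.injective)
      unfold cgrow
      rw [← this, Finset.mul_sum]
      apply Finset.sum_congr rfl
      intro j _; ring
    rwa [h2] at h1
  have hqcont : ContinuousOn q (Icc (0:ℝ) T) := fun t ht => (hq t ht).continuousWithinAt
  have hIcc_mem : ∀ x ∈ Ico (0:ℝ) T, Icc (0:ℝ) T ∈ nhdsWithin x (Ici x) := by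
    intro x hx
    apply Filter.mem_of_superset (inter_mem_nhdsWithin (Ici x) (Iic_mem_nhds hx.2))
    rintro y ⟨hy1, hy2⟩
    exact ⟨le_trans hx.1 hy1, hy2⟩
  have hqlin : ∀ t ∈ Icc (0:ℝ) T, q t = q0 lam0 + cgrow (n := n) * t := by
    have key : ∀ t ∈ Icc (0:ℝ) T,
        (fun s => q s - cgrow (n := n) * s) t = (fun s => q s - cgrow (n := n) * s) 0 := by
      apply constant_of_has_deriv_right_zero
      · apply ContinuousOn.sub hqcont
        exact (continuous_const.mul continuous_id).continuousOn
      · intro x hx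
        have hd : HasDerivWithinAt (fun s => q s - cgrow (n := n) * s) 0 (Icc (0:ℝ) T) x := by
          have hcm : HasDerivWithinAt (fun s : ℝ => cgrow (n := n) * s) (cgrow (n := n))
              (Icc (0:ℝ) T) x := by
            simpa using (hasDerivWithinAt_id x (Icc (0:ℝ) T)).const_mul (cgrow (n := n))
          simpa using (hq x (mem_of_mem_of_subset hx Ico_subset_Icc_self)).fun_sub hcm
        exact hd.mono_of_mem_nhdsWithin (hIcc_mem x hx)
    intro t ht
    have h1 := key t ht
    simp only at h1
    have h0' : q 0 = q0 lam0 := by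
      simp only [hq_def, hγ0]; rfl
    rw [h0'] at h1; linarith [h1]
  -- the bound on coordinates
  have hbound : ∀ t ∈ Icc (0:ℝ) T, ∀ j, |γ t j| ≤ Mb lam0 T := by
    intro t ht j
    apply Real.abs_le_sqrt
    have h1 : (γ t j) ^ 2 ≤ q t := Finset.single_le_sum (fun i _ => sq_nonneg (γ t i)) (mem_univ j)
    have h2 := hqlin t ht
    have h3 : cgrow (n := n) * t ≤ cgrow (n := n) * T :=
      mul_le_mul_of_nonneg_left ht.2 cgrow_nonneg
    linarith
  -- the quantity φ(t)
  set φ : ℝ → ℝ := fun t => ∑ j : Fin n, ∑ k ∈ Finset.univ.erase j,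
    Real.log (γ t k - γ t j) with hφ_def
  have hφ : ∀ t ∈ Icc (0:ℝ) T,
      HasDerivWithinAt φ (2 * ∑ j, (F (γ t) j) ^ 2) (Icc (0:ℝ) T) t := by
    intro t ht
    have h1 : HasDerivWithinAt φ
        (∑ j : Fin n, ∑ k ∈ Finset.univ.erase j,
          (F (γ t) k - F (γ t) j) / (γ t k - γ t j)) (Icc (0:ℝ) T) t := by
      apply HasDerivWithinAt.fun_sum
      intro j _
      apply HasDerivWithinAt.fun_sum
      intro k hk
      have hne : γ t k - γ t j ≠ 0 :=
        sub_ne_zero.mpr ((hγ' t ht).1.injective.ne (Finset.mem_erase.mp hk).1)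
      exact ((hcomp t ht k).sub (hcomp t ht j)).log hne
    rwa [sum_logderiv] at h1
  have hφcont : ContinuousOn φ (Icc (0:ℝ) T) := fun t ht => (hφ t ht).continuousWithinAt
  have hφmono : MonotoneOn φ (Icc (0:ℝ) T) := by
    apply monotoneOn_of_hasDerivWithinAt_nonneg (convex_Icc 0 T) hφcont
      (f' := fun t => 2 * ∑ j, (F (γ t) j) ^ 2)
    · intro x hx
      exact ((hφ x (interior_subset hx)).mono interior_subset)
    · intro x _
      positivity
  have hφ0 : φ 0 = phi0 lam0 := by
    simp only [hφ_def, hγ0]; rfl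
  -- gap bound
  intro t ht
  refine ⟨hbound t ht, ?_⟩
  intro j k hjk
  set M := Mb lam0 T
  set D := Db lam0 T
  have hD1 : (1:ℝ) ≤ D := Db_ge_one T
  have hlogD : (0:ℝ) ≤ Real.log D := Real.log_nonneg hD1
  have hmono := (hγ' t ht).1
  have habs : ∀ a b : Fin n, a ≠ b → Real.log (γ t a - γ t b) ≤ Real.log D := by
    intro a b hab
    have h1 : |γ t a - γ t b| ≤ D := by
      have := hbound t ht a
      have := hbound t ht b
      have h2 : |γ t a - γ t b| ≤ |γ t a| + |γ t b| := abs_sub _ _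
      unfold D
      unfold Db
      linarith
    have h0 : γ t a - γ t b ≠ 0 := sub_ne_zero.mpr (hmono.injective.ne hab)
    calc Real.log (γ t a - γ t b) = Real.log |γ t a - γ t b| := (Real.log_abs _).symm
      _ ≤ Real.log D := Real.log_le_log (abs_pos.mpr h0) h1
  -- single out the (j,k) term from φ t
  set inner : Fin n → ℝ := fun m => ∑ k' ∈ Finset.univ.erase m, Real.log (γ t k' - γ t m)
    with hinner_def
  have hsplit1 : φ t = inner j + ∑ m ∈ Finset.univ.erase j, inner m :=
    (Finset.add_sum_erase _ inner (mem_univ j)).symm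
  have hkj : k ∈ Finset.univ.erase j := Finset.mem_erase.mpr ⟨hjk.ne', mem_univ k⟩
  have hsplit2 : inner j = Real.log (γ t k - γ t j)
      + ∑ k' ∈ (Finset.univ.erase j).erase k, Real.log (γ t k' - γ t j) :=
    (Finset.add_sum_erase _ _ hkj).symm
  have hcard_le : ∀ (s : Finset (Fin n)), ((s.card : ℝ)) ≤ n := by
    intro s
    calc ((s.card : ℝ)) ≤ ((Finset.univ : Finset (Fin n)).card : ℝ) := by
          exact_mod_cast Finset.card_le_card (Finset.subset_univ s)
      _ = n := by simp
  have hsum_le : ∀ (s : Finset (Fin n)) (f : Fin n → ℝ), (∀ x ∈ s, f x ≤ Real.log D) →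
      ∑ x ∈ s, f x ≤ (n : ℝ) * Real.log D := by
    intro s f hf
    calc ∑ x ∈ s, f x ≤ s.card • Real.log D := Finset.sum_le_card_nsmul s f _ hf
      _ = (s.card : ℝ) * Real.log D := nsmul_eq_mul _ _
      _ ≤ (n : ℝ) * Real.log D := mul_le_mul_of_nonneg_right (hcard_le s) hlogD
  have hrest1 : ∑ k' ∈ (Finset.univ.erase j).erase k, Real.log (γ t k' - γ t j)
      ≤ (n : ℝ) * Real.log D := by
    apply hsum_le
    intro x hx
    exact habs x j (Finset.mem_erase.mp (Finset.mem_erase.mp hx).2).1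
  have hrest2 : ∑ m ∈ Finset.univ.erase j, inner m ≤ (n : ℝ) * ((n : ℝ) * Real.log D) := by
    calc ∑ m ∈ Finset.univ.erase j, inner m
        ≤ (Finset.univ.erase j).card • ((n : ℝ) * Real.log D) := by
          apply Finset.sum_le_card_nsmul
          intro m _
          apply hsum_le
          intro x hx
          exact habs x m (Finset.mem_erase.mp hx).1
      _ = ((Finset.univ.erase j).card : ℝ) * ((n : ℝ) * Real.log D) := nsmul_eq_mul _ _
      _ ≤ (n : ℝ) * ((n : ℝ) * Real.log D) := by
          apply mul_le_mul_of_nonneg_right (hcard_le _)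
          positivity
  have hφt : phi0 lam0 ≤ φ t := by
    rw [← hφ0]
    exact hφmono (left_mem_Icc.mpr hT) ht ht.1
  have hloggap : phi0 lam0 - ((n * n + n : ℕ) : ℝ) * Real.log D ≤ Real.log (γ t k - γ t j) := by
    have := hsplit1
    have := hsplit2
    have hc : ((n * n + n : ℕ) : ℝ) = (n : ℝ) * (n : ℝ) + (n : ℝ) := by push_cast; ring
    rw [hc]
    nlinarith [hrest1, hrest2, hφt, hsplit1, hsplit2]
  have hgappos : 0 < γ t k - γ t j := sub_pos.mpr (hmono hjk)
  calc delt lam0 T = Real.exp (phi0 lam0 - ((n * n + n : ℕ) : ℝ) * Real.log D) := rfl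
    _ ≤ Real.exp (Real.log (γ t k - γ t j)) := Real.exp_le_exp.mpr hloggap
    _ = γ t k - γ t j := Real.exp_log hgappos

/-- Uniqueness of solutions on `[0, T]`. -/
theorem unique {T : ℝ} (hT : 0 ≤ T) {γ₁ γ₂ : ℝ → Fin n → ℝ}
    (h1 : Sol lam0 T γ₁) (h2 : Sol lam0 T γ₂) : EqOn γ₁ γ₂ (Icc (0:ℝ) T) := by
  have hδ : 0 < delt lam0 T := delt_pos T
  have key : ∀ (γ : ℝ → Fin n → ℝ), Sol lam0 T γ →
      (ContinuousOn γ (Icc (0:ℝ) T) ∧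
        (∀ t ∈ Ico (0:ℝ) T, HasDerivWithinAt γ (F (γ t)) (Ici t) t) ∧
        (∀ t ∈ Ico (0:ℝ) T, γ t ∈ {x : Fin n → ℝ | Pgap (delt lam0 T) x})) := by
    intro γ hγ
    refine ⟨fun t ht => ((hγ.2 t ht).2).continuousWithinAt, ?_, ?_⟩
    · intro t ht
      exact ((hγ.2 t (Ico_subset_Icc_self ht)).2).mono_of_mem_nhdsWithin
        (Icc_mem_nhdsGE_of_mem ht)
    · intro t ht
      exact (apriori hT hγ t (Ico_subset_Icc_self ht)).2
  obtain ⟨hc1, hd1, hs1⟩ := key γ₁ h1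
  obtain ⟨hc2, hd2, hs2⟩ := key γ₂ h2
  exact ODE_solution_unique_of_mem_Icc_right
    (v := fun _ x => F x) (s := fun _ => {x : Fin n → ℝ | Pgap (delt lam0 T) x})
    (fun _ _ => lipschitzOnWith_F hδ) hc1 hd1 hs1 hc2 hd2 hs2 (h1.1.trans h2.1.symm)

/-- Uniform local existence time for initial data with gap at least `δ`. -/
noncomputable def eps (n : ℕ) (δ : ℝ) : ℝ := (δ / 4) / (2 * n / δ + 1)

lemma eps_pos {δ : ℝ} (hδ : 0 < δ) : 0 < eps n δ := by
  unfold eps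
  have : (0:ℝ) ≤ 2 * n / δ := by positivity
  apply div_pos (by linarith) (by linarith)

/-- Local existence: Picard–Lindelöf with explicit constants, keeping track of the fact that
the solution stays in a ball around the initial condition. -/
theorem picard_step {δ : ℝ} (hδ : 0 < δ) (t₀ : ℝ) {x₀ : Fin n → ℝ} (hx₀ : Pgap δ x₀) :
    ∃ f : ℝ → Fin n → ℝ, f t₀ = x₀ ∧ ∀ t ∈ Icc t₀ (t₀ + eps n δ),
      Pgap (δ / 2) (f t) ∧ HasDerivWithinAt f (F (f t)) (Icc t₀ (t₀ + eps n δ)) t := by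
  set C : ℝ := 2 * n / δ with hC_def
  have hC : 0 ≤ C := by positivity
  set R : ℝ := δ / 4 with hR_def
  have hR : 0 ≤ R := by positivity
  set ε : ℝ := eps n δ with hε_def
  have hε : 0 < ε := eps_pos hδ
  have hball : ∀ y ∈ Metric.closedBall x₀ R, Pgap (δ / 2) y := by
    intro y hy
    have := hx₀.closedBall hy
    have h2 : δ - 2 * R = δ / 2 := by rw [hR_def]; ring
    rwa [h2] at this
  have hRc : ((Real.toNNReal R : ℝ≥0) : ℝ) = R := Real.coe_toNNReal _ hR
  have hCc : ((Real.toNNReal C : ℝ≥0) : ℝ) = C := Real.coe_toNNReal _ hC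
  have hpl : IsPicardLindelof (fun _ x => F x) (tmin := t₀) (tmax := t₀ + ε)
      ⟨t₀, ⟨le_rfl, by linarith⟩⟩ x₀ (Real.toNNReal R) 0 (Real.toNNReal C)
      (Real.toNNReal (2 * n / (δ/2) ^ 2)) := by
    constructor
    · intro t _
      rw [hRc]
      exact (lipschitzOnWith_F (by linarith : (0:ℝ) < δ/2)).mono hball
    · intro x _
      exact continuousOn_const
    · intro t _ x hx
      rw [hRc] at hx
      have := norm_F_le (by linarith : (0:ℝ) < δ/2) (hball x hx)
      rw [hCc]
      calc ‖F x‖ ≤ (n : ℝ) / (δ/2) := this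
        _ = C := by rw [hC_def]; field_simp
    · simp only [NNReal.coe_zero, sub_zero, hCc, hRc]
      show C * max (t₀ + ε - t₀) (t₀ - t₀) ≤ R
      have h1 : max (t₀ + ε - t₀) (t₀ - t₀) = ε := by
        rw [max_eq_left] <;> simp [hε.le]
      rw [h1]
      have h2 : ε = R / (C + 1) := by rw [hε_def, hR_def, hC_def]; rfl
      rw [h2]
      rw [div_eq_mul_inv, ← mul_assoc]
      rw [mul_comm C R, mul_assoc]
      have h3 : C * (C + 1)⁻¹ ≤ 1 := by
        rw [mul_inv_le_iff₀ (by linarith)]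
        linarith
      nlinarith
  obtain ⟨α, hα⟩ := ODE.FunSpace.exists_isFixedPt_next hpl (Metric.mem_closedBall_self (by simp))
  refine ⟨α.compProj, ?_, fun t ht => ⟨?_, ?_⟩⟩
  · rw [ODE.FunSpace.compProj_of_mem ⟨le_rfl, by linarith⟩]
    exact α.apply_of_zero
  · have hmem := α.compProj_mem_closedBall hpl.mul_max_le (t := t)
    rw [hRc] at hmem
    exact hball _ hmem
  · apply ODE.hasDerivWithinAt_picard_Icc
      (⟨t₀, ⟨le_rfl, by linarith⟩⟩ : Icc t₀ (t₀ + ε)).2 hpl.continuousOn_uncurry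
      α.continuous_compProj.continuousOn
      (fun _ _ ↦ α.compProj_mem_closedBall hpl.mul_max_le) x₀ ht |>.congr_of_mem _ ht
    intro t' ht'
    nth_rw 1 [← hα]
    rw [ODE.FunSpace.compProj_of_mem ht', ODE.FunSpace.next_apply]

/-- Gluing two solutions at a common time point. -/
theorem glue_deriv {a b c : ℝ} (hab : a ≤ b) (hbc : b ≤ c) {γ f : ℝ → Fin n → ℝ}
    (hγ : ∀ t ∈ Icc a b, HasDerivWithinAt γ (F (γ t)) (Icc a b) t)
    (hf : ∀ t ∈ Icc b c, HasDerivWithinAt f (F (f t)) (Icc b c) t)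
    (hbf : f b = γ b) :
    ∀ t ∈ Icc a c, HasDerivWithinAt (fun s => if s ≤ b then γ s else f s)
      (F ((fun s => if s ≤ b then γ s else f s) t)) (Icc a c) t := by
  set g : ℝ → Fin n → ℝ := fun s => if s ≤ b then γ s else f s with hg_def
  have hg1 : ∀ s ∈ Icc a b, g s = γ s := fun s hs => if_pos hs.2
  have hg2 : ∀ s ∈ Icc b c, g s = f s := by
    intro s hs
    by_cases h : s ≤ b
    · have : s = b := le_antisymm h hs.1
      subst this
      simp [hg_def, hbf]
    · exact if_neg h
  have hsub1 : Icc a b ⊆ Icc a c := Icc_subset_Icc_right hbc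
  have hsub2 : Icc b c ⊆ Icc a c := Icc_subset_Icc_left hab
  intro t ht
  rcases lt_trichotomy t b with hlt | heq | hgt
  · have htb : t ∈ Icc a b := ⟨ht.1, hlt.le⟩
    have h1 : HasDerivWithinAt g (F (g t)) (Icc a b) t := by
      have := (hγ t htb).congr (fun s hs => hg1 s hs) (hg1 t htb)
      rwa [hg1 t htb]
    apply h1.mono_of_mem_nhdsWithin
    have hmem : Icc a c ∩ Iic b ∈ nhdsWithin t (Icc a c) :=
      inter_mem_nhdsWithin _ (Iic_mem_nhds hlt)
    have heqset : Icc a c ∩ Iic b = Icc a b := by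
      ext y
      simp only [Set.mem_inter_iff, Set.mem_Icc, Set.mem_Iic]
      constructor
      · rintro ⟨⟨h1', _⟩, h3⟩; exact ⟨h1', h3⟩
      · rintro ⟨h1', h3⟩; exact ⟨⟨h1', h3.trans hbc⟩, h3⟩
    rwa [heqset] at hmem
  · subst heq
    have htb : t ∈ Icc a t := ⟨ht.1, le_rfl⟩
    have htc : t ∈ Icc t c := ⟨le_rfl, hbc⟩
    have hL : HasDerivWithinAt g (F (g t)) (Icc a t) t := by
      have := (hγ t htb).congr (fun s hs => hg1 s hs) (hg1 t htb)
      rwa [hg1 t htb]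
    have hR : HasDerivWithinAt g (F (g t)) (Icc t c) t := by
      have hgt' : g t = f t := hg2 t htc
      have := (hf t htc).congr (fun s hs => hg2 s hs) hgt'
      rwa [hgt']
    have := hL.union hR
    rwa [Icc_union_Icc_eq_Icc hab hbc] at this
  · have htb : t ∈ Icc b c := ⟨hgt.le, ht.2⟩
    have h1 : HasDerivWithinAt g (F (g t)) (Icc b c) t := by
      have := (hf t htb).congr (fun s hs => hg2 s hs) (hg2 t htb)
      rwa [hg2 t htb]
    apply h1.mono_of_mem_nhdsWithin
    have hmem : Icc a c ∩ Ici b ∈ nhdsWithin t (Icc a c) :=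
      inter_mem_nhdsWithin _ (Ici_mem_nhds hgt)
    have heqset : Icc a c ∩ Ici b = Icc b c := by
      ext y
      simp only [Set.mem_inter_iff, Set.mem_Icc, Set.mem_Ici]
      constructor
      · rintro ⟨⟨_, h2'⟩, h3⟩; exact ⟨h3, h2'⟩
      · rintro ⟨h3, h2'⟩; exact ⟨⟨hab.trans h3, h2'⟩, h3⟩
    rwa [heqset] at hmem

/-- Restriction of a solution to a shorter time interval. -/
theorem Sol.restrict {T S : ℝ} {γ : ℝ → Fin n → ℝ} (hγ : Sol lam0 T γ)
    (hS0 : 0 ≤ S) (hST : S ≤ T) : Sol lam0 S γ := by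
  refine ⟨hγ.1, fun t ht => ?_⟩
  have ht' : t ∈ Icc (0:ℝ) T := ⟨ht.1, ht.2.trans hST⟩
  exact ⟨(hγ.2 t ht').1, (hγ.2 t ht').2.mono (Icc_subset_Icc_right hST)⟩

/-- The trivial solution at time `0`. -/
theorem sol_zero (h0 : StrictMono lam0) : Sol lam0 0 (fun _ => lam0) := by
  refine ⟨rfl, fun t ht => ?_⟩
  have : t = 0 := le_antisymm ht.2 ht.1
  subst this
  refine ⟨h0, ?_⟩
  rw [hasDerivWithinAt_iff_tendsto_slope]
  have : Icc (0:ℝ) 0 \ {0} = ∅ := by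
    rw [Set.Icc_self]
    exact Set.diff_self
  rw [this, nhdsWithin_empty]
  exact Filter.tendsto_bot

/-- Global existence: a solution exists on `[0, T]` for every `T ≥ 0`. -/
theorem global (h0 : StrictMono lam0) : ∀ T : ℝ, 0 ≤ T → ∃ γ, Sol lam0 T γ := by
  by_contra hcon
  push_neg at hcon
  obtain ⟨Tbad, hTbad0, hTbad⟩ := hcon
  set Abad : Set ℝ := {T : ℝ | 0 ≤ T ∧ ¬∃ γ, Sol lam0 T γ} with hAbad_def
  have hne : Abad.Nonempty := ⟨Tbad, hTbad0, not_exists.mpr hTbad⟩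
  have hbdd : BddBelow Abad := ⟨0, fun x hx => hx.1⟩
  set T₀ : ℝ := sInf Abad with hT₀_def
  have hT₀0 : 0 ≤ T₀ := le_csInf hne fun x hx => hx.1
  have hbelow : ∀ S, 0 ≤ S → S < T₀ → ∃ γ, Sol lam0 S γ := by
    intro S hS0 hST
    by_contra hS
    exact absurd (csInf_le hbdd ⟨hS0, hS⟩) (not_le.mpr hST)
  set δ₁ : ℝ := delt lam0 (T₀ + 1) with hδ₁_def
  have hδ₁ : 0 < δ₁ := delt_pos _
  set ε : ℝ := eps n δ₁ with hε_def
  have hε : 0 < ε := eps_pos hδ₁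
  set S : ℝ := max 0 (T₀ - ε / 2) with hS_def
  have hS0 : 0 ≤ S := le_max_left _ _
  have hST₀ : S ≤ T₀ := max_le hT₀0 (by linarith)
  have hSε : T₀ ≤ S + ε / 2 := by
    have := le_max_right 0 (T₀ - ε / 2)
    linarith
  have hSsol : ∃ γ, Sol lam0 S γ := by
    rcases le_or_gt (T₀ - ε / 2) 0 with h | h
    · have hSeq : S = 0 := max_eq_left h
      rw [hSeq]
      exact ⟨_, sol_zero h0⟩
    · have hSeq : S = T₀ - ε / 2 := max_eq_right h.le
      apply hbelow S hS0
      rw [hSeq]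
      linarith
  obtain ⟨γ, hγ⟩ := hSsol
  have hpg : Pgap δ₁ (γ S) := by
    have h1 := (apriori hS0 hγ S ⟨hS0, le_rfl⟩).2
    exact h1.mono (delt_anti (by linarith))
  obtain ⟨f, hfS, hf⟩ := picard_step hδ₁ S hpg
  set g : ℝ → Fin n → ℝ := fun s => if s ≤ S then γ s else f s with hg_def
  have hgSol : Sol lam0 (S + ε) g := by
    refine ⟨?_, fun t ht => ⟨?_, ?_⟩⟩
    · show (if (0:ℝ) ≤ S then γ 0 else f 0) = lam0
      rw [if_pos hS0, hγ.1]
    · by_cases h : t ≤ S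
      · have : g t = γ t := if_pos h
        rw [hg_def]
        simp only [if_pos h]
        exact (hγ.2 t ⟨ht.1, h⟩).1
      · rw [hg_def]
        simp only [if_neg h]
        have ht' : t ∈ Icc S (S + eps n δ₁) := ⟨(not_le.mp h).le, ht.2⟩
        exact ((hf t ht').1).strictMono (by linarith)
    · have := glue_deriv hS0 (by linarith : S ≤ S + ε) (fun s hs => (hγ.2 s hs).2)
        (fun s hs => (hf s hs).2) (hfS.trans rfl) t ht
      exact this
  have hlow : ∀ T ∈ Abad, S + ε ≤ T := by
    intro T hT
    by_contra h
    push_neg at h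
    exact hT.2 ⟨g, hgSol.restrict hT.1 h.le⟩
  have : S + ε ≤ T₀ := le_csInf hne hlow
  linarith

end CoulombODE

open CoulombODE Set in
/-- Global existence and uniqueness for the Coulomb repulsion ODE
`λ_j′ = Σ_{k≠j} 1/(λ_j − λ_k)` starting in the open Weyl chamber
`{λ : λ₁ < … < λₙ}` (encoded by `StrictMono`): there is a solution defined for all
`t ≥ 0` which stays in the Weyl chamber (no collisions), and it is unique on `[0,∞)`. -/
theorem coulomb_ode_global_existence_uniqueness (n : ℕ) (lam0 : Fin n → ℝ)
    (h0 : StrictMono lam0) :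
    ∃ lam : ℝ → Fin n → ℝ,
      (lam 0 = lam0 ∧
        ∀ t ∈ Set.Ici (0 : ℝ), StrictMono (lam t) ∧
          HasDerivWithinAt lam
            (fun j => ∑ k ∈ Finset.univ.erase j, (lam t j - lam t k)⁻¹)
            (Set.Ici 0) t) ∧
      ∀ lam' : ℝ → Fin n → ℝ,
        (lam' 0 = lam0 ∧
          ∀ t ∈ Set.Ici (0 : ℝ), StrictMono (lam' t) ∧
            HasDerivWithinAt lam'
              (fun j => ∑ k ∈ Finset.univ.erase j, (lam' t j - lam' t k)⁻¹)
              (Set.Ici 0) t) →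
        Set.EqOn lam' lam (Set.Ici 0) := by
  have hex : ∀ T : ℝ, ∃ γ : ℝ → Fin n → ℝ, 0 ≤ T → Sol lam0 T γ := by
    intro T
    rcases le_or_gt 0 T with h | h
    · obtain ⟨γ, hγ⟩ := global h0 T h
      exact ⟨γ, fun _ => hγ⟩
    · exact ⟨fun _ _ => 0, fun h' => absurd h' (not_le.mpr h)⟩
  choose sol hsol using hex
  set lam : ℝ → Fin n → ℝ := fun t => if h : 0 ≤ t then sol t t else lam0 with hlam_def
  have hagree : ∀ T : ℝ, 0 ≤ T → ∀ s ∈ Icc (0:ℝ) T, lam s = sol T s := by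
    intro T hT s hs
    have h0s : (0:ℝ) ≤ s := hs.1
    have e1 : Sol lam0 s (sol s) := hsol s h0s
    have e2 : Sol lam0 s (sol T) := (hsol T hT).restrict h0s hs.2
    have := unique h0s e1 e2 ⟨h0s, le_rfl⟩
    simp only [hlam_def, dif_pos h0s]
    exact this
  have hlam_eval : ∀ t : ℝ, 0 ≤ t → lam t = sol t t := by
    intro t ht
    simp only [hlam_def, dif_pos ht]
  refine ⟨lam, ⟨?_, ?_⟩, ?_⟩
  · rw [hlam_eval 0 le_rfl]
    exact (hsol 0 le_rfl).1
  · intro t ht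
    have ht' : (0:ℝ) ≤ t := ht
    constructor
    · rw [hlam_eval t ht']
      exact ((hsol t ht').2 t ⟨ht', le_rfl⟩).1
    · have hT1 : (0:ℝ) ≤ t + 1 := by linarith
      have hd : HasDerivWithinAt (sol (t+1)) (F (sol (t+1) t)) (Icc (0:ℝ) (t+1)) t :=
        ((hsol (t+1) hT1).2 t ⟨ht', by linarith⟩).2
      have htmem : t ∈ Icc (0:ℝ) (t+1) := ⟨ht', by linarith⟩
      have hd' : HasDerivWithinAt lam (F (sol (t+1) t)) (Icc (0:ℝ) (t+1)) t :=
        hd.congr (fun s hs => hagree (t+1) hT1 s hs) (hagree (t+1) hT1 t htmem)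
      have hval : sol (t+1) t = lam t := (hagree (t+1) hT1 t htmem).symm
      rw [hval] at hd'
      have hmem : Icc (0:ℝ) (t+1) ∈ nhdsWithin t (Ici (0:ℝ)) := by
        have h1 : Ici (0:ℝ) ∩ Iic (t+1) ∈ nhdsWithin t (Ici (0:ℝ)) :=
          inter_mem_nhdsWithin _ (Iic_mem_nhds (by linarith))
        rwa [Ici_inter_Iic] at h1
      exact hd'.mono_of_mem_nhdsWithin hmem
  · intro lam' ⟨h'0, h'⟩ t ht
    have ht' : (0:ℝ) ≤ t := ht
    have hs1 : Sol lam0 t lam' := by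
      refine ⟨h'0, fun s hs => ?_⟩
      have hs' : s ∈ Ici (0:ℝ) := hs.1
      exact ⟨(h' s hs').1, ((h' s hs').2).mono (fun u hu => hu.1)⟩
    have hs2 : Sol lam0 t (sol t) := hsol t ht'
    have := unique ht' hs1 hs2 ⟨ht', le_rfl⟩
    rw [this, ← hlam_eval t ht']
end
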